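/- Fix λ > 0 and an even integer k ≥ 2. Define P₁ = ∫_{-∞}^{∞} g(x)·(Pr[Lap(λ) > x-1]·Pr[Lap(λ) ≤ x-1])^{k/2} dx and P₃ = ∫_{-∞}^{∞} g(x)·(Pr[Lap(λ) > x]·Pr[Lap(λ) ≤ x-2])^{k/2} dx, where g is the density of 1 + Lap(λ). Then P₁/P₃ > e^{k/(2λ)}. Consequently, if λ ≤ k/(4ε), then P₁/P₃ > e^{2ε}, so the binary sparse vector technique with noise scale λ does not satisfy ε-differential privacy. -/

import Mathlib

open Real MeasureTheory

/-- Pr[Lap(l) > t] for the Laplace distribution with scale l,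
density (1/(2l))·exp(-|y|/l). -/
noncomputable def lapTail (l t : ℝ) : ℝ :=
  ∫ y in Set.Ioi t, (1 / (2 * l)) * Real.exp (-|y| / l)

/-- Pr[Lap(l) ≤ t]. -/
noncomputable def lapCDF (l t : ℝ) : ℝ :=
  ∫ y in Set.Iic t, (1 / (2 * l)) * Real.exp (-|y| / l)

open Set

section aux
variable {l : ℝ} (hl : 0 < l)
include hl


lemma lap_intOn_Ioi (t : ℝ) (ht : 0 ≤ t) :
    IntegrableOn (fun y => (1 / (2 * l)) * Real.exp (-|y| / l)) (Ioi t) := by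
  have h := ((exp_neg_integrableOn_Ioi t (show (0:ℝ) < 1/l by positivity)).const_mul
    (1 / (2 * l)))
  refine MeasureTheory.IntegrableOn.congr_fun h (fun y hy => ?_) measurableSet_Ioi
  have : |y| = y := abs_of_pos (lt_of_le_of_lt ht hy)
  rw [this]
  ring_nf

lemma lapTail_of_nonneg {t : ℝ} (ht : 0 ≤ t) :
    lapTail l t = (1/2) * Real.exp (-t / l) := by
  have h1 : ∀ y ∈ Ioi t, (1 / (2 * l)) * Real.exp (-|y| / l)
      = (1 / (2 * l)) * Real.exp (-((1/l) * y)) := by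
    intro y hy
    have : |y| = y := abs_of_pos (lt_of_le_of_lt ht hy)
    rw [this]; ring_nf
  rw [lapTail, setIntegral_congr_fun measurableSet_Ioi h1, MeasureTheory.integral_const_mul,
    integral_comp_mul_left_Ioi (fun y => Real.exp (-y)) t (show (0:ℝ) < 1/l by positivity)]
  
  rw [integral_exp_neg_Ioi]
  field_simp
  ring

lemma lapTail_of_nonpos {t : ℝ} (ht : t ≤ 0) :
    lapTail l t = 1 - (1/2) * Real.exp (t / l) := by
  have hsplit : Ioi t = Ioc t 0 ∪ Ioi 0 := (Ioc_union_Ioi_eq_Ioi ht).symm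
  have hdisj : Disjoint (Ioc t (0:ℝ)) (Ioi 0) := Ioc_disjoint_Ioi le_rfl
  have hcont : Continuous (fun y : ℝ => (1 / (2 * l)) * Real.exp (-|y| / l)) := by
    exact continuous_const.mul ((continuous_abs.neg.div_const l).rexp)
  have h1 : IntegrableOn (fun y => (1 / (2 * l)) * Real.exp (-|y| / l)) (Ioc t 0) :=
    hcont.integrableOn_Ioc
  have h2 := lap_intOn_Ioi hl 0 le_rfl
  rw [lapTail, hsplit, setIntegral_union hdisj measurableSet_Ioi h1 h2]
  have h3 : (∫ y in Ioc t 0, (1 / (2 * l)) * Real.exp (-|y| / l))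
      = ∫ y in Ioc t 0, (1 / (2 * l)) * Real.exp (y / l) := by
    refine setIntegral_congr_fun measurableSet_Ioc (fun y hy => ?_)
    have : |y| = -y := abs_of_nonpos hy.2
    rw [this]; ring_nf
  have h4 : (∫ y in Ioc t 0, (1 / (2 * l)) * Real.exp (y / l))
      = (1/2) * (1 - Real.exp (t / l)) := by
    rw [← intervalIntegral.integral_of_le ht, intervalIntegral.integral_const_mul,
      intervalIntegral.integral_comp_div (f := Real.exp) (ne_of_gt hl),
      integral_exp]
    rw [zero_div, Real.exp_zero]
    field_simp
    ring
  have h5 : lapTail l 0 = 1/2 := by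
    rw [lapTail_of_nonneg hl le_rfl]; simp
  rw [h3, h4]
  rw [lapTail] at h5
  rw [h5]
  ring

lemma lapCDF_eq_tail (t : ℝ) : lapCDF l t = lapTail l (-t) := by
  have : (fun y : ℝ => (1 / (2 * l)) * Real.exp (-|y| / l))
      = fun y : ℝ => (1 / (2 * l)) * Real.exp (-|(-y)| / l) := by
    funext y; rw [abs_neg]
  rw [lapCDF, this]
  rw [integral_comp_neg_Iic t (fun y => (1 / (2 * l)) * Real.exp (-|y| / l))]
  rfl

lemma lapCDF_of_nonpos {t : ℝ} (ht : t ≤ 0) :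
    lapCDF l t = (1/2) * Real.exp (t / l) := by
  rw [lapCDF_eq_tail hl, lapTail_of_nonneg hl (by linarith), neg_neg]

lemma lapCDF_of_nonneg {t : ℝ} (ht : 0 ≤ t) :
    lapCDF l t = 1 - (1/2) * Real.exp (-t / l) := by
  rw [lapCDF_eq_tail hl, lapTail_of_nonpos hl (by linarith), neg_div]

lemma lapTail_pos (t : ℝ) : 0 < lapTail l t := by
  rcases le_total 0 t with h | h
  · rw [lapTail_of_nonneg hl h]; positivity
  · rw [lapTail_of_nonpos hl h]
    have : Real.exp (t / l) ≤ 1 := Real.exp_le_one_iff.mpr (by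
      exact div_nonpos_of_nonpos_of_nonneg h hl.le)
    nlinarith

lemma lapCDF_pos (t : ℝ) : 0 < lapCDF l t := by
  rw [lapCDF_eq_tail hl]; exact lapTail_pos hl _

lemma lapTail_add_CDF (t : ℝ) : lapTail l t + lapCDF l t = 1 := by
  rcases le_total 0 t with h | h
  · rw [lapTail_of_nonneg hl h, lapCDF_of_nonneg hl h]; ring
  · rw [lapTail_of_nonpos hl h, lapCDF_of_nonpos hl h]; ring

lemma lapTail_le_one (t : ℝ) : lapTail l t ≤ 1 := by
  have := lapCDF_pos hl t; have := lapTail_add_CDF hl t; linarith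

lemma lapCDF_le_one (t : ℝ) : lapCDF l t ≤ 1 := by
  have := lapTail_pos hl t; have := lapTail_add_CDF hl t; linarith

lemma lapCDF_strictMono : StrictMono (lapCDF l) := by
  intro s t hst
  rcases le_total t 0 with h | h
  · rw [lapCDF_of_nonpos hl (le_of_lt (lt_of_lt_of_le hst h)), lapCDF_of_nonpos hl h]
    have := Real.exp_lt_exp.mpr (show s / l < t / l by
      exact div_lt_div_of_pos_right hst hl)
    linarith
  · rcases le_total 0 s with h' | h'
    · rw [lapCDF_of_nonneg hl h', lapCDF_of_nonneg hl h]
      have := Real.exp_lt_exp.mpr (show -t / l < -s / l by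
        apply div_lt_div_of_pos_right _ hl; linarith)
      linarith
    · rw [lapCDF_of_nonpos hl h', lapCDF_of_nonneg hl h]
      have h1 : Real.exp (s / l) ≤ 1 := Real.exp_le_one_iff.mpr
        (div_nonpos_of_nonpos_of_nonneg h' hl.le)
      have h2 : Real.exp (-t / l) ≤ 1 := Real.exp_le_one_iff.mpr
        (div_nonpos_of_nonpos_of_nonneg (by linarith) hl.le)
      rcases lt_or_ge s 0 with hs | hs
      · have : Real.exp (s / l) < 1 := Real.exp_lt_one_iff.mpr
          (div_neg_of_neg_of_pos hs hl)
        linarith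
      · have ht' : 0 < t := by linarith
        have : Real.exp (-t / l) < 1 := Real.exp_lt_one_iff.mpr
          (div_neg_of_neg_of_pos (by linarith) hl)
        linarith

lemma lapTail_strictAnti : StrictAnti (lapTail l) := by
  intro s t hst
  have h1 := lapTail_add_CDF hl s
  have h2 := lapTail_add_CDF hl t
  have := lapCDF_strictMono hl hst
  linarith

lemma lapCDF_continuous : Continuous (lapCDF l) := by
  have hE : lapCDF l = fun t => if t ≤ 0 then (1/2) * Real.exp (t/l)
      else 1 - (1/2) * Real.exp (-t/l) := by
    funext t
    rcases le_or_gt t 0 with h | h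
    · rw [if_pos h, lapCDF_of_nonpos hl h]
    · rw [if_neg (not_le.mpr h), lapCDF_of_nonneg hl h.le]
  rw [hE]
  apply Continuous.if_le
  · exact continuous_const.mul ((continuous_id.div_const l).rexp)
  · exact continuous_const.sub
      (continuous_const.mul ((continuous_id.neg.div_const l).rexp))
  · exact continuous_id
  · exact continuous_const
  · intro x hx
    rw [show x = 0 from hx]
    norm_num

lemma lapTail_continuous : Continuous (lapTail l) := by
  have : lapTail l = fun t => 1 - lapCDF l t := by
    funext t; have := lapTail_add_CDF hl t; linarith
  rw [this]
  exact continuous_const.sub (lapCDF_continuous hl)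

lemma key_ineq (x : ℝ) :
    Real.exp (1/l) * (lapTail l x * lapCDF l (x - 2))
      < lapTail l (x - 1) * lapCDF l (x - 1) := by
  rcases le_or_gt x 0 with hx | hx
  · -- x ≤ 0 : F(x-1) = e^{1/l} F(x-2), S(x-1) > S x
    have hF1 : lapCDF l (x - 1) = Real.exp (1/l) * lapCDF l (x - 2) := by
      rw [lapCDF_of_nonpos hl (by linarith), lapCDF_of_nonpos hl (by linarith)]
      rw [show (x-1)/l = 1/l + (x-2)/l by field_simp; ring, Real.exp_add]
      ring
    have hS : lapTail l x < lapTail l (x - 1) := lapTail_strictAnti hl (by linarith)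
    have hFpos : 0 < lapCDF l (x - 2) := lapCDF_pos hl _
    have hepos : 0 < Real.exp (1/l) := Real.exp_pos _
    rw [hF1]
    have h2 := mul_lt_mul_of_pos_right hS (mul_pos hepos hFpos)
    nlinarith [h2]
  · rcases le_or_gt 1 x with hx1 | hx1
    · -- 1 ≤ x : S(x-1) = e^{1/l} S x, F(x-1) > F(x-2)
      have hS1 : lapTail l (x - 1) = Real.exp (1/l) * lapTail l x := by
        rw [lapTail_of_nonneg hl (by linarith), lapTail_of_nonneg hl (by linarith)]
        rw [show -(x-1)/l = 1/l + -x/l by field_simp; ring, Real.exp_add]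
        ring
      have hF : lapCDF l (x - 2) < lapCDF l (x - 1) := lapCDF_strictMono hl (by linarith)
      have hSpos : 0 < lapTail l x := lapTail_pos hl _
      have hepos : 0 < Real.exp (1/l) := Real.exp_pos _
      rw [hS1]
      nlinarith [mul_lt_mul_of_pos_left hF (mul_pos hepos hSpos)]
    · -- 0 < x < 1
      rw [lapTail_of_nonneg hl hx.le, lapCDF_of_nonpos hl (by linarith),
        lapTail_of_nonpos hl (by linarith), lapCDF_of_nonpos hl (by linarith)]
      have e1 : Real.exp (1/l) * ((1/2) * Real.exp (-x / l) * ((1/2) * Real.exp ((x-2)/l)))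
          = (1/4) * Real.exp (-(1/l)) := by
        have h : Real.exp (1/l) * Real.exp (-x/l) * Real.exp ((x-2)/l)
            = Real.exp (-(1/l)) := by
          rw [← Real.exp_add, ← Real.exp_add]
          congr 1
          field_simp
          ring
        linear_combination (1/4 : ℝ) * h
      have hv : Real.exp (-(1/l)) < Real.exp ((x-1)/l) := by
        apply Real.exp_lt_exp.mpr
        rw [show -(1/l) = (-1)/l by ring]
        exact div_lt_div_of_pos_right (by linarith) hl
      have hu1 : Real.exp ((x-1)/l) < 1 :=
        Real.exp_lt_one_iff.mpr (div_neg_of_neg_of_pos (by linarith) hl)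
      have hvpos : 0 < Real.exp (-(1/l)) := Real.exp_pos _
      nlinarith [e1, hv, hu1, hvpos,
        mul_pos (sub_pos.mpr hv) (sub_pos.mpr hu1)]

lemma lap_density_integrable :
    Integrable (fun y : ℝ => (1 / (2 * l)) * Real.exp (-|y| / l)) := by
  set f := fun y : ℝ => (1 / (2 * l)) * Real.exp (-|y| / l) with hf
  have hIoi : IntegrableOn f (Ioi 0) := lap_intOn_Ioi hl 0 le_rfl
  have hIci : IntegrableOn f (Ici 0) := Iff.mpr integrableOn_Ici_iff_integrableOn_Ioi hIoi
  have A : MeasurableEmbedding (fun x : ℝ => -x) :=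
    (Homeomorph.neg ℝ).isClosedEmbedding.measurableEmbedding
  have hmap : volume.restrict (Iic (0:ℝ))
      = Measure.map (fun x : ℝ => -x) (volume.restrict (Ici (0:ℝ))) := by
    rw [show (Ici (0:ℝ)) = (fun x : ℝ => -x) ⁻¹' (Iic 0) by ext x; simp,
      ← Measure.restrict_map measurable_neg measurableSet_Iic,
      Measure.map_neg_eq_self (volume : Measure ℝ)]
  have hIic : IntegrableOn f (Iic 0) := by
    rw [IntegrableOn, hmap, A.integrable_map_iff]
    have : (f ∘ fun x : ℝ => -x) = f := by
      funext y; simp only [Function.comp, hf, abs_neg]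
    rw [this]
    exact hIci
  rw [← integrableOn_univ, ← Set.Iic_union_Ioi (a := (0:ℝ))]
  exact hIic.union hIoi

end aux

/-- the binary SVT counterexample: P₁/P₃ > e^{k/(2λ)}, hence
λ ≤ k/(4ε) implies P₁/P₃ > e^{2ε}, violating ε-differential privacy. -/
theorem stmt12 (l ε : ℝ) (hl : 0 < l) (hε : 0 < ε)
    (k m : ℕ) (hk : 2 ≤ k) (hm : k = 2 * m)
    (g : ℝ → ℝ) (hg : g = fun x => (1 / (2 * l)) * Real.exp (-|x - 1| / l))
    (P1 P3 : ℝ)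
    (hP1 : P1 = ∫ x : ℝ, g x * (lapTail l (x - 1) * lapCDF l (x - 1)) ^ m)
    (hP3 : P3 = ∫ x : ℝ, g x * (lapTail l x * lapCDF l (x - 2)) ^ m) :
    P1 / P3 > Real.exp ((k : ℝ) / (2 * l)) ∧
      (l ≤ (k : ℝ) / (4 * ε) → P1 / P3 > Real.exp (2 * ε)) := by
  have hm1 : 1 ≤ m := by omega
  set A : ℝ → ℝ := fun x => lapTail l (x - 1) * lapCDF l (x - 1) with hA
  set B : ℝ → ℝ := fun x => lapTail l x * lapCDF l (x - 2) with hB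
  have hgpos : ∀ x, 0 < g x := by
    intro x; rw [hg]; positivity
  have hgcont : Continuous g := by
    rw [hg]
    exact continuous_const.mul
      (((continuous_id.sub continuous_const).abs.neg.div_const l).rexp)
  have hgint : Integrable g := by
    rw [hg]; exact (lap_density_integrable hl).comp_sub_right 1
  have hApos : ∀ x, 0 < A x := fun x => mul_pos (lapTail_pos hl _) (lapCDF_pos hl _)
  have hBpos : ∀ x, 0 < B x := fun x => mul_pos (lapTail_pos hl _) (lapCDF_pos hl _)
  have hA1 : ∀ x, A x ≤ 1 := fun x =>
    mul_le_one₀ (lapTail_le_one hl _) (lapCDF_pos hl _).le (lapCDF_le_one hl _)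
  have hB1 : ∀ x, B x ≤ 1 := fun x =>
    mul_le_one₀ (lapTail_le_one hl _) (lapCDF_pos hl _).le (lapCDF_le_one hl _)
  have hAcont : Continuous A :=
    ((lapTail_continuous hl).comp (continuous_id.sub continuous_const)).mul
      ((lapCDF_continuous hl).comp (continuous_id.sub continuous_const))
  have hBcont : Continuous B :=
    (lapTail_continuous hl).mul
      ((lapCDF_continuous hl).comp (continuous_id.sub continuous_const))
  have hint1 : Integrable (fun x => g x * A x ^ m) := by
    apply Integrable.mono' hgint (hgcont.mul (hAcont.pow m)).aestronglyMeasurable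
    filter_upwards with x
    have h1 : A x ^ m ≤ 1 := pow_le_one₀ (hApos x).le (hA1 x)
    have h2 : (0:ℝ) ≤ g x * A x ^ m :=
      mul_nonneg (hgpos x).le (pow_nonneg (hApos x).le m)
    rw [Real.norm_eq_abs, Pi.mul_apply, Pi.pow_apply, abs_of_nonneg h2]
    nlinarith [hgpos x]
  have hint3 : Integrable (fun x => g x * B x ^ m) := by
    apply Integrable.mono' hgint (hgcont.mul (hBcont.pow m)).aestronglyMeasurable
    filter_upwards with x
    have h1 : B x ^ m ≤ 1 := pow_le_one₀ (hBpos x).le (hB1 x)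
    have h2 : (0:ℝ) ≤ g x * B x ^ m :=
      mul_nonneg (hgpos x).le (pow_nonneg (hBpos x).le m)
    rw [Real.norm_eq_abs, Pi.mul_apply, Pi.pow_apply, abs_of_nonneg h2]
    nlinarith [hgpos x]
  have hP3pos : 0 < P3 := by
    rw [hP3]
    refine (integral_pos_iff_support_of_nonneg (fun x => ?_) hint3).mpr ?_
    · exact mul_nonneg (hgpos x).le (pow_nonneg (hBpos x).le m)
    · have hsupp : Function.support (fun x => g x * B x ^ m) = Set.univ := by
        apply Set.eq_univ_iff_forall.mpr
        intro x
        exact Function.mem_support.mpr (ne_of_gt (mul_pos (hgpos x) (pow_pos (hBpos x) m)))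
      rw [hsupp, Real.volume_univ]
      exact ENNReal.zero_lt_top
  have hptw : ∀ x, Real.exp ((m:ℝ)/l) * (g x * B x ^ m) < g x * A x ^ m := by
    intro x
    have hk1 := key_ineq hl x
    have h2 : (Real.exp (1/l) * B x) ^ m < A x ^ m :=
      pow_lt_pow_left₀ hk1 (mul_pos (Real.exp_pos _) (hBpos x)).le (by omega)
    have h3 : (Real.exp (1/l) * B x) ^ m = Real.exp ((m:ℝ)/l) * B x ^ m := by
      rw [mul_pow, ← Real.exp_nat_mul, mul_one_div]
    calc Real.exp ((m:ℝ)/l) * (g x * B x ^ m)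
        = g x * (Real.exp ((m:ℝ)/l) * B x ^ m) := by ring
      _ = g x * (Real.exp (1/l) * B x) ^ m := by rw [h3]
      _ < g x * A x ^ m := by
          exact mul_lt_mul_of_pos_left h2 (hgpos x)
  have hD : 0 < P1 - Real.exp ((m:ℝ)/l) * P3 := by
    have hint3' := hint3.const_mul (Real.exp ((m:ℝ)/l))
    have heq : P1 - Real.exp ((m:ℝ)/l) * P3
        = ∫ x, (g x * A x ^ m - Real.exp ((m:ℝ)/l) * (g x * B x ^ m)) := by
      rw [hP1, hP3, integral_sub hint1 hint3', MeasureTheory.integral_const_mul]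
    rw [heq]
    refine (integral_pos_iff_support_of_nonneg (fun x => ?_) (hint1.sub hint3')).mpr ?_
    · exact sub_nonneg.mpr (hptw x).le
    · have hfun : ((fun x => g x * A x ^ m)
          - fun x => Real.exp ((m:ℝ)/l) * (g x * B x ^ m))
          = fun x => g x * A x ^ m - Real.exp ((m:ℝ)/l) * (g x * B x ^ m) := rfl
      have hsupp : Function.support
          (fun x => g x * A x ^ m - Real.exp ((m:ℝ)/l) * (g x * B x ^ m))
          = Set.univ := by
        apply Set.eq_univ_iff_forall.mpr
        intro x
        exact Function.mem_support.mpr (ne_of_gt (sub_pos.mpr (hptw x)))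
      rw [hfun, hsupp, Real.volume_univ]
      exact ENNReal.zero_lt_top
  have hmain : P1 / P3 > Real.exp ((m:ℝ)/l) := by
    rw [gt_iff_lt, lt_div_iff₀ hP3pos]
    linarith
  have hkm : (k:ℝ)/(2*l) = (m:ℝ)/l := by
    rw [hm]; push_cast; field_simp
  constructor
  · rw [hkm]; exact hmain
  · intro hle
    have h4 : l * (4*ε) ≤ k := (le_div_iff₀ (by positivity)).mp hle
    have h5 : 2*ε ≤ (k:ℝ)/(2*l) := by
      rw [le_div_iff₀ (by positivity)]; nlinarith
    calc Real.exp (2*ε) ≤ Real.exp ((k:ℝ)/(2*l)) := Real.exp_le_exp.mpr h5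
      _ < P1/P3 := by rw [hkm]; exact hmain
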